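/- Let X be a reflexive ordered Banach space with generating cone, Z a Banach lattice, J ∈ L(X, Z) positive, and (R_n) ⊆ L(Z, X) positive with R_n J → id_X in the weak operator topology. Then span(X'_+), equipped with an equivalent norm, is a KB-space: every increasing norm-bounded net in its positive cone is norm-convergent. -/

import Mathlib

open Filter Topology

/-- `f` is a positive functional with respect to the cone `P`. -/
def dualPos {X : Type*} [NormedAddCommGroup X] [NormedSpace ℝ X]
    (P : Set X) (f : X →L[ℝ] ℝ) : Prop := ∀ x ∈ P, 0 ≤ f x

/-- `f` lies in the span `X'₊ - X'₊` of the dual cone. -/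
def inDualSpan {X : Type*} [NormedAddCommGroup X] [NormedSpace ℝ X]
    (P : Set X) (f : X →L[ℝ] ℝ) : Prop :=
  ∃ g, dualPos P g ∧ ∃ h, dualPos P h ∧ f = g - h

/-- The dual order on `X'` induced by the cone `P ⊆ X`. -/
def dualLE {X : Type*} [NormedAddCommGroup X] [NormedSpace ℝ X]
    (P : Set X) (f g : X →L[ℝ] ℝ) : Prop := ∀ x ∈ P, f x ≤ g x

/-- The span norm on `span(X'₊)`. -/
noncomputable def dualSpanNorm {X : Type*} [NormedAddCommGroup X] [NormedSpace ℝ X]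
    (P : Set X) (f : X →L[ℝ] ℝ) : ℝ :=
  sInf {r : ℝ | ∃ g, dualPos P g ∧ ∃ h, dualPos P h ∧ f = g - h ∧ r = ‖g‖ + ‖h‖}



lemma decomp_bound {X : Type*} [NormedAddCommGroup X] [NormedSpace ℝ X] [CompleteSpace X]
    (P : Set X) (hPclosed : IsClosed P)
    (hPadd : ∀ x ∈ P, ∀ y ∈ P, x + y ∈ P)
    (hPsmul : ∀ (a : ℝ), 0 ≤ a → ∀ x ∈ P, a • x ∈ P)
    (hgen : ∀ x : X, ∃ y ∈ P, ∃ z ∈ P, x = y - z) :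
    ∃ K : ℝ, 1 ≤ K ∧ ∀ x : X, ∃ y ∈ P, ∃ z ∈ P,
      x = y - z ∧ ‖y‖ ≤ K * ‖x‖ ∧ ‖z‖ ≤ K * ‖x‖ := by
  classical
  have h0P : (0 : X) ∈ P := by
    obtain ⟨y, hy, -⟩ := hgen 0
    simpa using hPsmul 0 le_rfl y hy
  set D : ℕ → Set X := fun n =>
    {x | ∃ y ∈ P, ∃ z ∈ P, x = y - z ∧ ‖y‖ ≤ (n : ℝ) ∧ ‖z‖ ≤ (n : ℝ)} with hD
  have hcover : (⋃ n, closure (D n)) = Set.univ := by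
    refine Set.eq_univ_of_forall fun x => ?_
    obtain ⟨y, hy, z, hz, hxyz⟩ := hgen x
    obtain ⟨n, hn⟩ := exists_nat_ge (max ‖y‖ ‖z‖)
    exact Set.mem_iUnion.mpr ⟨n, subset_closure
      ⟨y, hy, z, hz, hxyz, (le_max_left _ _).trans hn, (le_max_right _ _).trans hn⟩⟩
  obtain ⟨N, ⟨u, hu⟩⟩ := nonempty_interior_of_iUnion_of_closed
    (fun n => isClosed_closure (s := D n)) hcover
  have hconv : Convex ℝ (closure (D N)) := by
    refine Convex.closure ?_
    rintro x₁ ⟨y₁, hy₁, z₁, hz₁, rfl, hny₁, hnz₁⟩ x₂ ⟨y₂, hy₂, z₂, hz₂, rfl, hny₂, hnz₂⟩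
      a b ha hb hab
    refine ⟨a • y₁ + b • y₂, hPadd _ (hPsmul a ha _ hy₁) _ (hPsmul b hb _ hy₂),
      a • z₁ + b • z₂, hPadd _ (hPsmul a ha _ hz₁) _ (hPsmul b hb _ hz₂), by
        simp only [smul_sub]; abel, ?_, ?_⟩
    · calc ‖a • y₁ + b • y₂‖ ≤ ‖a • y₁‖ + ‖b • y₂‖ := norm_add_le _ _
        _ = a * ‖y₁‖ + b * ‖y₂‖ := by rw [norm_smul, norm_smul,
            Real.norm_of_nonneg ha, Real.norm_of_nonneg hb]
        _ ≤ a * N + b * N := by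
            apply add_le_add <;> apply mul_le_mul_of_nonneg_left <;> assumption
        _ = N := by rw [← add_mul, hab, one_mul]
    · calc ‖a • z₁ + b • z₂‖ ≤ ‖a • z₁‖ + ‖b • z₂‖ := norm_add_le _ _
        _ = a * ‖z₁‖ + b * ‖z₂‖ := by rw [norm_smul, norm_smul,
            Real.norm_of_nonneg ha, Real.norm_of_nonneg hb]
        _ ≤ a * N + b * N := by
            apply add_le_add <;> apply mul_le_mul_of_nonneg_left <;> assumption
        _ = N := by rw [← add_mul, hab, one_mul]
  have hsymm : ∀ x ∈ closure (D N), -x ∈ closure (D N) := by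
    intro x hx
    have : Continuous (fun t : X => -t) := continuous_neg
    have hmaps : (fun t : X => -t) '' (D N) ⊆ D N := by
      rintro - ⟨t, ⟨y, hy, z, hz, rfl, hny, hnz⟩, rfl⟩
      exact ⟨z, hz, y, hy, by abel, hnz, hny⟩
    have := image_closure_subset_closure_image (f := fun t : X => -t) this (s := D N)
    exact closure_mono hmaps (this ⟨x, hx, rfl⟩)
  obtain ⟨ρ, hρpos, hball⟩ := Metric.mem_nhds_iff.mp (mem_interior_iff_mem_nhds.mp hu)
  have hball0 : ∀ v : X, ‖v‖ < ρ → v ∈ closure (D N) := by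
    intro v hv
    have h1 : u + v ∈ closure (D N) := hball (by
      simpa [Metric.mem_ball, dist_eq_norm] using by simpa using hv)
    have h2 : -(u - v) ∈ closure (D N) := hsymm _ (hball (by
      simp [Metric.mem_ball, dist_eq_norm, hv]))
    have := hconv h1 h2 (a := 1/2) (b := 1/2) (by norm_num) (by norm_num) (by norm_num)
    convert this using 1
    simp only [smul_sub, smul_add, smul_neg]
    module
  have happrox : ∀ (c : ℝ), 0 < c → ∀ v : X, ‖v‖ < c * ρ → ∀ ε : ℝ, 0 < ε →
      ∃ y ∈ P, ∃ z ∈ P, ‖y‖ ≤ c * N ∧ ‖z‖ ≤ c * N ∧ ‖v - (y - z)‖ < ε := by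
    intro c hc v hv ε hε
    have hv' : ‖c⁻¹ • v‖ < ρ := by
      rw [norm_smul, Real.norm_of_nonneg (by positivity)]
      rw [inv_mul_lt_iff₀ hc]; exact hv
    have hmem := hball0 _ hv'
    rw [Metric.mem_closure_iff] at hmem
    obtain ⟨d, ⟨y, hy, z, hz, rfl, hny, hnz⟩, hd⟩ := hmem (ε / c) (by positivity)
    refine ⟨c • y, hPsmul c hc.le _ hy, c • z, hPsmul c hc.le _ hz, ?_, ?_, ?_⟩
    · rw [norm_smul, Real.norm_of_nonneg hc.le]
      exact mul_le_mul_of_nonneg_left hny hc.le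
    · rw [norm_smul, Real.norm_of_nonneg hc.le]
      exact mul_le_mul_of_nonneg_left hnz hc.le
    · have : v - (c • y - c • z) = c • (c⁻¹ • v - (y - z)) := by
        rw [smul_sub, smul_sub, smul_inv_smul₀ hc.ne']
      rw [this, norm_smul, Real.norm_of_nonneg hc.le]
      calc c * ‖c⁻¹ • v - (y - z)‖ < c * (ε / c) := by
            apply mul_lt_mul_of_pos_left _ hc
            rw [dist_eq_norm] at hd; exact hd
        _ = ε := by field_simp
  have hstep : ∀ (k : ℕ) (v : X), ∃ y z : X, y ∈ P ∧ z ∈ P ∧ ‖y‖ ≤ (N:ℝ)/2^k ∧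
      ‖z‖ ≤ (N:ℝ)/2^k ∧ (‖v‖ < ρ/2^k → ‖v - (y - z)‖ < ρ/2^(k+1)) := by
    intro k v
    by_cases hv : ‖v‖ < ρ/2^k
    · have hc : (0:ℝ) < ((2:ℝ)^k)⁻¹ := by positivity
      obtain ⟨y, hy, z, hz, hny, hnz, hlt⟩ := happrox ((2:ℝ)^k)⁻¹ hc v
        (by rw [inv_mul_eq_div]; exact hv) (ρ/2^(k+1)) (by positivity)
      exact ⟨y, z, hy, hz, by rwa [inv_mul_eq_div] at hny,
        by rwa [inv_mul_eq_div] at hnz, fun _ => hlt⟩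
    · exact ⟨0, 0, h0P, h0P, by rw [norm_zero]; positivity, by rw [norm_zero]; positivity, fun h => absurd h hv⟩
  choose Y Z hYP hZP hYn hZn hYZ using hstep
  have key : ∀ x : X, ‖x‖ < ρ → ∃ y ∈ P, ∃ z ∈ P,
      x = y - z ∧ ‖y‖ ≤ 2*N ∧ ‖z‖ ≤ 2*N := by
    intro x hx
    set v : ℕ → X := fun k => Nat.rec x (fun k vk => vk - (Y k vk - Z k vk)) k with hvdef
    have hvs : ∀ k, v (k+1) = v k - (Y k (v k) - Z k (v k)) := fun k => rfl
    have hinv : ∀ k, ‖v k‖ < ρ/2^k := by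
      intro k
      induction k with
      | zero => show ‖x‖ < ρ/2^0; simpa using hx
      | succ k ih => rw [hvs k]; exact hYZ k (v k) ih
    set yk : ℕ → X := fun k => Y k (v k) with hykdef
    set zk : ℕ → X := fun k => Z k (v k) with hzkdef
    have hgeo : HasSum (fun k : ℕ => (N:ℝ) * (1/2)^k) ((N:ℝ) * 2) :=
      hasSum_geometric_two.mul_left _
    have hbound : ∀ (W : ℕ → X), (∀ k, ‖W k‖ ≤ (N:ℝ)/2^k) →
        Summable W ∧ (Summable W → ‖∑' k, W k‖ ≤ 2*N) := by
      intro W hW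
      have hW' : ∀ k, ‖W k‖ ≤ (N:ℝ) * (1/2)^k := by
        intro k; rw [one_div, inv_pow, mul_comm, inv_mul_eq_div]; exact hW k
      have hsum : Summable W := Summable.of_norm_bounded hgeo.summable hW'
      exact ⟨hsum, fun _ => by
        have := tsum_of_norm_bounded hgeo hW'
        linarith⟩
    have hysum : Summable yk := (hbound yk (fun k => hYn k (v k))).1
    have hzsum : Summable zk := (hbound zk (fun k => hZn k (v k))).1
    have hyb : ‖∑' k, yk k‖ ≤ 2*N := (hbound yk (fun k => hYn k (v k))).2 hysum
    have hzb : ‖∑' k, zk k‖ ≤ 2*N := (hbound zk (fun k => hZn k (v k))).2 hzsum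
    have hmemsum : ∀ (W : ℕ → X), (∀ k, W k ∈ P) → Summable W → (∑' k, W k) ∈ P := by
      intro W hWP hsum
      have hpart : ∀ m, ∑ k ∈ Finset.range m, W k ∈ P := by
        intro m
        induction m with
        | zero => simpa using h0P
        | succ m ih => rw [Finset.sum_range_succ]; exact hPadd _ ih _ (hWP m)
      exact hPclosed.mem_of_tendsto hsum.hasSum.tendsto_sum_nat
        (Filter.Eventually.of_forall hpart)
    have hyP : (∑' k, yk k) ∈ P := hmemsum yk (fun k => hYP k (v k)) hysum
    have hzP : (∑' k, zk k) ∈ P := hmemsum zk (fun k => hZP k (v k)) hzsum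
    refine ⟨∑' k, yk k, hyP, ∑' k, zk k, hzP, ?_, hyb, hzb⟩
    have hpartials : ∀ m, x - v m = ∑ k ∈ Finset.range m, (yk k - zk k) := by
      intro m
      induction m with
      | zero => simp [hvdef]
      | succ m ih =>
        rw [Finset.sum_range_succ, ← ih, hvs m]
        abel
    have hv0 : Tendsto v atTop (𝓝 0) := by
      apply squeeze_zero_norm (fun k => (hinv k).le)
      have : Tendsto (fun k : ℕ => ρ * (1/2)^k) atTop (𝓝 (ρ * 0)) :=
        (tendsto_pow_atTop_nhds_zero_of_lt_one (by norm_num) (by norm_num)).const_mul ρ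
      simpa [div_eq_mul_inv, one_div, inv_pow] using this
    have h1 : Tendsto (fun m => x - v m) atTop (𝓝 x) := by
      simpa using tendsto_const_nhds.sub hv0
    have h2 : Tendsto (fun m => ∑ k ∈ Finset.range m, (yk k - zk k)) atTop
        (𝓝 ((∑' k, yk k) - ∑' k, zk k)) :=
      (hysum.hasSum.sub hzsum.hasSum).tendsto_sum_nat
    have := tendsto_nhds_unique (h1.congr (fun m => hpartials m)) h2
    exact this
  refine ⟨max 1 (4*((N:ℝ)+1)/ρ), le_max_left _ _, fun x => ?_⟩
  rcases eq_or_ne x 0 with rfl | hx0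
  · exact ⟨0, h0P, 0, h0P, by simp, by simp, by simp⟩
  · have hxpos : 0 < ‖x‖ := norm_pos_iff.mpr hx0
    set c : ℝ := ρ/(2*‖x‖) with hcdef
    have hc : 0 < c := by positivity
    have hcx : ‖c • x‖ < ρ := by
      rw [norm_smul, Real.norm_of_nonneg hc.le, hcdef]
      rw [div_mul_eq_mul_div, mul_comm]
      rw [div_lt_iff₀ (by positivity)]
      nlinarith
    obtain ⟨y', hy', z', hz', hdec, hby, hbz⟩ := key (c • x) hcx
    refine ⟨c⁻¹ • y', hPsmul _ (by positivity) _ hy', c⁻¹ • z',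
      hPsmul _ (by positivity) _ hz', ?_, ?_, ?_⟩
    · rw [← smul_sub, ← hdec, inv_smul_smul₀ hc.ne']
    · rw [norm_smul, Real.norm_of_nonneg (by positivity : (0:ℝ) ≤ c⁻¹)]
      have h1 : c⁻¹ * ‖y'‖ ≤ c⁻¹ * (2*N) := by
        apply mul_le_mul_of_nonneg_left hby (by positivity)
      refine h1.trans ?_
      have hc' : c⁻¹ = 2*‖x‖/ρ := by rw [hcdef]; field_simp
      rw [hc']
      calc 2*‖x‖/ρ * (2*N) = (4*N/ρ) * ‖x‖ := by ring
        _ ≤ (4*((N:ℝ)+1)/ρ) * ‖x‖ := by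
            apply mul_le_mul_of_nonneg_right _ hxpos.le
            gcongr
            linarith
        _ ≤ max 1 (4*((N:ℝ)+1)/ρ) * ‖x‖ :=
            mul_le_mul_of_nonneg_right (le_max_right _ _) hxpos.le
    · rw [norm_smul, Real.norm_of_nonneg (by positivity : (0:ℝ) ≤ c⁻¹)]
      have h1 : c⁻¹ * ‖z'‖ ≤ c⁻¹ * (2*N) := by
        apply mul_le_mul_of_nonneg_left hbz (by positivity)
      refine h1.trans ?_
      have hc' : c⁻¹ = 2*‖x‖/ρ := by rw [hcdef]; field_simp
      rw [hc']
      calc 2*‖x‖/ρ * (2*N) = (4*N/ρ) * ‖x‖ := by ring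
        _ ≤ (4*((N:ℝ)+1)/ρ) * ‖x‖ := by
            apply mul_le_mul_of_nonneg_right _ hxpos.le
            gcongr
            linarith
        _ ≤ max 1 (4*((N:ℝ)+1)/ρ) * ‖x‖ :=
            mul_le_mul_of_nonneg_right (le_max_right _ _) hxpos.le

lemma dualPos_zero {X : Type*} [NormedAddCommGroup X] [NormedSpace ℝ X] (P : Set X) :
    dualPos P (0 : X →L[ℝ] ℝ) := fun x _ => le_of_eq rfl

lemma dualSpanNorm_of_pos {X : Type*} [NormedAddCommGroup X] [NormedSpace ℝ X]
    (P : Set X) (f : X →L[ℝ] ℝ) (hf : dualPos P f) : dualSpanNorm P f = ‖f‖ := by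
  apply le_antisymm
  · apply csInf_le
    · exact ⟨0, by rintro r ⟨g, -, h, -, -, rfl⟩; positivity⟩
    · exact ⟨f, hf, 0, dualPos_zero P, by simp, by simp⟩
  · apply le_csInf
    · exact ⟨‖f‖, f, hf, 0, dualPos_zero P, by simp, by simp⟩
    · rintro r ⟨g, -, h, -, rfl, rfl⟩
      exact norm_sub_le _ _
lemma norm_le_dualSpanNorm {X : Type*} [NormedAddCommGroup X] [NormedSpace ℝ X]
    (P : Set X) (f : X →L[ℝ] ℝ) (hf : inDualSpan P f) : ‖f‖ ≤ dualSpanNorm P f := by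
  apply le_csInf
  · obtain ⟨g, hg, h, hh, rfl⟩ := hf
    exact ⟨‖g‖ + ‖h‖, g, hg, h, hh, rfl, rfl⟩
  · rintro r ⟨g, -, h, -, rfl, rfl⟩
    exact norm_sub_le _ _

open NormedSpace

lemma cone_norming {X : Type*} [NormedAddCommGroup X] [NormedSpace ℝ X]
    (P : Set X) (hPsmul : ∀ (a : ℝ), 0 ≤ a → ∀ x ∈ P, a • x ∈ P)
    (K : ℝ) (hK : 1 ≤ K)
    (hKdec : ∀ x : X, ∃ y ∈ P, ∃ z ∈ P, x = y - z ∧ ‖y‖ ≤ K * ‖x‖ ∧ ‖z‖ ≤ K * ‖x‖)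
    (φ : X →L[ℝ] ℝ) (hφ : dualPos P φ) (ε : ℝ) (hε : 0 < ε) :
    ∃ x ∈ P, ‖x‖ ≤ 1 ∧ (‖φ‖ - ε) / (2 * K) ≤ φ x := by
  have hK0 : (0 : ℝ) < K := lt_of_lt_of_le one_pos hK
  -- find a unit vector almost attaining the norm
  obtain ⟨x₀, hx₀n, hx₀⟩ : ∃ x₀ : X, ‖x₀‖ ≤ 1 ∧ ‖φ‖ - ε < ‖φ x₀‖ := by
    by_contra hcon
    push_neg at hcon
    have : ‖φ‖ ≤ ‖φ‖ - ε := by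
      apply ContinuousLinearMap.opNorm_le_bound' φ (by
        have := norm_nonneg φ
        by_contra hneg
        push_neg at hneg
        have h0 := hcon 0 (by simp)
        simp at h0
        linarith)
      intro x hx
      have h1 := hcon (‖x‖⁻¹ • x) (by
        rw [norm_smul, Real.norm_of_nonneg (by positivity), inv_mul_le_iff₀ (by positivity)]
        simp)
      rw [map_smul, smul_eq_mul, Real.norm_eq_abs, abs_mul, abs_inv, abs_norm] at h1
      rw [inv_mul_le_iff₀ (by positivity)] at h1
      calc ‖φ x‖ = |φ x| := rfl
        _ ≤ (‖φ‖ - ε) * ‖x‖ := by rw [mul_comm]; exact h1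
    linarith
  obtain ⟨y, hy, z, hz, hxyz, hny, hnz⟩ := hKdec x₀
  have hφy : 0 ≤ φ y := hφ y hy
  have hφz : 0 ≤ φ z := hφ z hz
  have habs : ‖φ x₀‖ ≤ φ y + φ z := by
    rw [hxyz, map_sub, Real.norm_eq_abs, abs_sub_comm, abs_sub_le_iff]
    constructor <;> linarith
  have hmax : (‖φ‖ - ε) / 2 ≤ max (φ y) (φ z) := by
    have : ‖φ‖ - ε < φ y + φ z := lt_of_lt_of_le hx₀ habs
    rcases le_total (φ y) (φ z) with h | h
    · rw [max_eq_right h]; linarith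
    · rw [max_eq_left h]; linarith
  rcases le_total (φ y) (φ z) with h | h
  · refine ⟨K⁻¹ • z, hPsmul _ (by positivity) _ hz, ?_, ?_⟩
    · rw [norm_smul, Real.norm_of_nonneg (by positivity), inv_mul_le_iff₀ hK0, mul_one]
      exact hnz.trans (by nlinarith [norm_nonneg x₀])
    · rw [map_smul, smul_eq_mul]
      rw [max_eq_right h] at hmax
      rw [div_le_iff₀ (by norm_num)] at hmax
      have : (‖φ‖ - ε)/(2*K) ≤ (φ z)/K := by
        rw [div_le_div_iff₀ (by positivity) hK0]
        nlinarith
      simpa [inv_mul_eq_div] using this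
  · refine ⟨K⁻¹ • y, hPsmul _ (by positivity) _ hy, ?_, ?_⟩
    · rw [norm_smul, Real.norm_of_nonneg (by positivity), inv_mul_le_iff₀ hK0, mul_one]
      exact hny.trans (by nlinarith [norm_nonneg x₀])
    · rw [map_smul, smul_eq_mul]
      rw [max_eq_left h] at hmax
      rw [div_le_iff₀ (by norm_num)] at hmax
      have : (‖φ‖ - ε)/(2*K) ≤ (φ y)/K := by
        rw [div_le_div_iff₀ (by positivity) hK0]
        nlinarith
      simpa [inv_mul_eq_div] using this

lemma part2 {X : Type*} [NormedAddCommGroup X] [NormedSpace ℝ X]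
    (hrefl : Function.Surjective (NormedSpace.inclusionInDoubleDual ℝ X))
    (P : Set X)
    (hPsmul : ∀ (a : ℝ), 0 ≤ a → ∀ x ∈ P, a • x ∈ P)
    (hgen : ∀ x : X, ∃ y ∈ P, ∃ z ∈ P, x = y - z)
    (K : ℝ) (hK : 1 ≤ K)
    (hKdec : ∀ x : X, ∃ y ∈ P, ∃ z ∈ P, x = y - z ∧ ‖y‖ ≤ K * ‖x‖ ∧ ‖z‖ ≤ K * ‖x‖)
    (ι : Type) [Nonempty ι] [SemilatticeSup ι] (g : ι → X →L[ℝ] ℝ)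
    (hpos : ∀ i, dualPos P (g i))
    (hmono : ∀ i j, i ≤ j → dualLE P (g i) (g j))
    (hbdd : ∃ b : ℝ, ∀ i, dualSpanNorm P (g i) ≤ b) :
    ∃ s : X →L[ℝ] ℝ, inDualSpan P s ∧
      Tendsto (fun i => dualSpanNorm P (s - g i)) atTop (𝓝 0) := by
  classical
  have hK0 : (0:ℝ) < K := lt_of_lt_of_le one_pos hK
  obtain ⟨b, hb⟩ := hbdd
  have hnormb : ∀ i, ‖g i‖ ≤ b := fun i => by
    rw [← dualSpanNorm_of_pos P (g i) (hpos i)]; exact hb i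
  -- the ultrafilter limit in the weak-* topology
  have hU : (atTop : Filter ι).NeBot := atTop_neBot
  set U : Ultrafilter ι := Ultrafilter.of atTop with hUdef
  have hUle : (U : Filter ι) ≤ atTop := Ultrafilter.of_le _
  have hmemball : ∀ i, (StrongDual.toWeakDual (g i) : WeakDual ℝ X) ∈
      WeakDual.toStrongDual ⁻¹' Metric.closedBall 0 b := by
    intro i
    simp only [Set.mem_preimage, Metric.mem_closedBall, dist_zero_right]
    exact hnormb i
  obtain ⟨s', hs'mem, hs'lim⟩ := (WeakDual.isCompact_closedBall (𝕜 := ℝ) (E := X)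
      0 b).ultrafilter_le_nhds' (U.map fun i => StrongDual.toWeakDual (g i)) (by
    simp only [Ultrafilter.mem_map]
    exact Filter.univ_mem' hmemball)
  set s : X →L[ℝ] ℝ := WeakDual.toStrongDual s' with hsdef
  have hst : Tendsto (fun i => (StrongDual.toWeakDual (g i) : WeakDual ℝ X)) (U : Filter ι) (𝓝 s') := by
    rw [Filter.Tendsto, ← Ultrafilter.coe_map]
    exact hs'lim
  have heval : ∀ x : X, Tendsto (fun i => g i x) (U : Filter ι) (𝓝 (s x)) := by
    intro x
    have := tendsto_iff_forall_eval_tendsto_topDualPairing.mp hst x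
    exact this
  -- pointwise convergence on the cone along atTop
  have hlim : ∀ x ∈ P, Tendsto (fun i => g i x) atTop (𝓝 (s x)) := by
    intro x hx
    have hmonox : Monotone fun i => g i x := fun i j hij => hmono i j hij x hx
    have hbddx : BddAbove (Set.range fun i => g i x) := by
      refine ⟨b * ‖x‖, ?_⟩
      rintro - ⟨i, rfl⟩
      calc g i x ≤ ‖g i x‖ := le_abs_self _
        _ ≤ ‖g i‖ * ‖x‖ := (g i).le_opNorm x
        _ ≤ b * ‖x‖ := mul_le_mul_of_nonneg_right (hnormb i) (norm_nonneg x)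
    have h1 := tendsto_atTop_ciSup hmonox hbddx
    have h2 : Tendsto (fun i => g i x) (U : Filter ι) (𝓝 (⨆ i, g i x)) :=
      h1.mono_left hUle
    have : s x = ⨆ i, g i x := tendsto_nhds_unique (heval x) h2
    rwa [this]
  have hlimall : ∀ x : X, Tendsto (fun i => g i x) atTop (𝓝 (s x)) := by
    intro x
    obtain ⟨y, hy, z, hz, rfl⟩ := hgen x
    have := (hlim y hy).sub (hlim z hz)
    simpa [map_sub] using this
  have hspos : dualPos P s := fun x hx =>
    ge_of_tendsto (hlim x hx) (Filter.Eventually.of_forall fun i => hpos i x hx)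
  have hsge : ∀ j, dualPos P (s - g j) := by
    intro j x hx
    have hev : ∀ᶠ i in atTop, g j x ≤ g i x :=
      Filter.eventually_atTop.mpr ⟨j, fun i hij => hmono j i hij x hx⟩
    have := ge_of_tendsto (hlim x hx) hev
    simpa [sub_nonneg] using this
  refine ⟨s, ⟨s, hspos, 0, dualPos_zero P, (sub_zero s).symm⟩, ?_⟩
  have hrw : (fun i => dualSpanNorm P (s - g i)) = fun i => ‖s - g i‖ :=
    funext fun i => dualSpanNorm_of_pos P _ (hsge i)
  rw [hrw]
  -- norm convergence, by contradiction
  by_contra hcon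
  rw [Metric.tendsto_nhds] at hcon
  push_neg at hcon
  obtain ⟨ε, hε, hfreq'⟩ := hcon
  simp only [← not_lt] at hfreq'
  have hfreq : ∃ᶠ i in atTop, ε ≤ ‖s - g i‖ := by
    refine hfreq'.mono fun i hi => ?_
    rw [Real.dist_eq, abs_sub_comm, abs_of_nonpos (by simp [norm_nonneg])] at hi
    push_neg at hi
    simpa using hi
  -- choose norming elements in the cone
  have hxs : ∀ i, ∃ x ∈ P, ‖x‖ ≤ 1 ∧ (‖s - g i‖ - ε/2) / (2*K) ≤ (s - g i) x :=
    fun i => cone_norming P hPsmul K hK hKdec (s - g i) (hsge i) (ε/2) (by positivity)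
  choose xs hxsP hxsn hxsval using hxs
  set ε₀ : ℝ := ε / (4*K) with hε₀def
  have hε₀ : 0 < ε₀ := by positivity
  have hfreq2 : ∃ᶠ i in atTop, ε₀ ≤ (s - g i) (xs i) := by
    refine hfreq.mono fun i hi => ?_
    refine le_trans ?_ (hxsval i)
    rw [hε₀def, div_le_div_iff₀ (by positivity) (by positivity)]
    nlinarith
  -- an ultrafilter concentrating on the frequent set
  have hne : ((atTop : Filter ι) ⊓ 𝓟 {i | ε₀ ≤ (s - g i) (xs i)}).NeBot :=
    Filter.frequently_iff_neBot.mp hfreq2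
  set V : Ultrafilter ι := Ultrafilter.of ((atTop : Filter ι) ⊓ 𝓟 {i | ε₀ ≤ (s - g i) (xs i)})
    with hVdef
  have hVle : (V : Filter ι) ≤ atTop ⊓ 𝓟 {i | ε₀ ≤ (s - g i) (xs i)} := Ultrafilter.of_le _
  have hVatTop : (V : Filter ι) ≤ atTop := hVle.trans inf_le_left
  have hVS : {i | ε₀ ≤ (s - g i) (xs i)} ∈ (V : Filter ι) :=
    hVle (Filter.mem_inf_of_right (Filter.mem_principal_self _))
  -- weak-* cluster point of the norming elements in the double dual
  have hmemball2 : ∀ i, (StrongDual.toWeakDual (inclusionInDoubleDual ℝ X (xs i)) :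
      WeakDual ℝ (StrongDual ℝ X)) ∈ WeakDual.toStrongDual ⁻¹' Metric.closedBall 0 1 := by
    intro i
    simp only [Set.mem_preimage, Metric.mem_closedBall, dist_zero_right]
    exact le_trans (dist_zero_right ((inclusionInDoubleDual ℝ X) (xs i))).le (le_trans (double_dual_bound ℝ X (xs i)) (hxsn i))
  obtain ⟨Φ, hΦmem, hΦlim⟩ := (WeakDual.isCompact_closedBall (𝕜 := ℝ) (E := StrongDual ℝ X)
      0 1).ultrafilter_le_nhds'
      (V.map fun i => StrongDual.toWeakDual (inclusionInDoubleDual ℝ X (xs i))) (by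
    simp only [Ultrafilter.mem_map]
    exact Filter.univ_mem' hmemball2)
  obtain ⟨xstar, hxstar⟩ := hrefl (WeakDual.toStrongDual Φ)
  have hΦt : Tendsto (fun i => (StrongDual.toWeakDual (inclusionInDoubleDual ℝ X (xs i)) :
      WeakDual ℝ (StrongDual ℝ X))) (V : Filter ι) (𝓝 Φ) := by
    rw [Filter.Tendsto, ← Ultrafilter.coe_map]
    exact hΦlim
  have hevalΦ : ∀ ψ : X →L[ℝ] ℝ, Tendsto (fun i => ψ (xs i)) (V : Filter ι) (𝓝 (ψ xstar)) := by
    intro ψ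
    have := tendsto_iff_forall_eval_tendsto_topDualPairing.mp hΦt ψ
    have heq : (WeakDual.toStrongDual Φ) ψ = ψ xstar := by rw [← hxstar]; rfl
    change Tendsto (fun i => ψ (xs i)) _ (𝓝 ((WeakDual.toStrongDual Φ) ψ)) at this
    rw [← heq]
    exact this
  -- for each j, the limit functional dominates ε₀
  have hlower : ∀ j, ε₀ ≤ (s - g j) xstar := by
    intro j
    refine ge_of_tendsto (hevalΦ (s - g j)) ?_
    have hj : {i | j ≤ i} ∈ (V : Filter ι) := hVatTop (Filter.mem_atTop j)
    filter_upwards [hj, hVS] with i hij hiS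
    calc ε₀ ≤ (s - g i) (xs i) := hiS
      _ ≤ (s - g j) (xs i) := by
          simp only [ContinuousLinearMap.sub_apply]
          have := hmono j i hij (xs i) (hxsP i)
          linarith
  have hzero : Tendsto (fun j => (s - g j) xstar) atTop (𝓝 0) := by
    have := (tendsto_const_nhds (x := s xstar) (f := atTop (α := ι))).sub (hlimall xstar)
    simpa using this
  have : ε₀ ≤ 0 := ge_of_tendsto hzero (Filter.Eventually.of_forall hlower)
  linarith

section aux
variable {X : Type*} [NormedAddCommGroup X] [NormedSpace ℝ X]

lemma riesz_decomp {Z : Type*} [Lattice Z] [AddCommGroup Z]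
    [CovariantClass Z Z (· + ·) (· ≤ ·)] (w b c : Z)
    (hb : 0 ≤ b) (hc : 0 ≤ c) (h : |w| ≤ b + c) :
    ∃ w₁ w₂ : Z, w = w₁ + w₂ ∧ |w₁| ≤ b ∧ |w₂| ≤ c := by
  have hw1 : w ≤ b + c := (le_abs_self w).trans h
  have hw2 : -w ≤ b + c := (neg_le_abs w).trans h
  set w₁ : Z := (w ⊔ (-b)) ⊓ b with hw₁def
  refine ⟨w₁, w - w₁, by abel, ?_, ?_⟩
  · rw [abs_le']
    refine ⟨inf_le_right, ?_⟩
    rw [neg_le]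
    exact le_inf (le_sup_right) (neg_le_self hb)
  · rw [abs_le']
    constructor
    · rw [sub_le_iff_le_add', ← sub_le_iff_le_add]
      refine le_inf (le_trans ?_ le_sup_left) ?_
      · exact sub_le_self w hc
      · rw [sub_le_iff_le_add]; exact hw1
    · rw [neg_sub, sub_le_iff_le_add]
      refine inf_le_left.trans (sup_le ?_ ?_)
      · exact le_add_of_nonneg_left hc
      · rw [neg_le, neg_add]
        calc -c + -w = -w - c := by abel
          _ ≤ b := by rw [sub_le_iff_le_add]; exact hw2

set_option maxHeartbeats 1000000 in
lemma part1 {Z : Type*} [NormedAddCommGroup Z] [Lattice Z] [HasSolidNorm Z] [IsOrderedAddMonoid Z] [NormedSpace ℝ Z]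
    (P : Set X)
    (hPadd : ∀ x ∈ P, ∀ y ∈ P, x + y ∈ P)
    (J : X →L[ℝ] Z) (hJ : ∀ x ∈ P, 0 ≤ J x)
    (R : ℕ → Z →L[ℝ] X) (hR : ∀ n, ∀ z : Z, 0 ≤ z → R n z ∈ P)
    (hWOT : ∀ (x : X) (φ : X →L[ℝ] ℝ),
      Tendsto (fun n => φ (R n (J x))) atTop (𝓝 (φ x)))
    (K : ℝ) (hK : 1 ≤ K)
    (hKdec : ∀ x : X, ∃ y ∈ P, ∃ z ∈ P, x = y - z ∧ ‖y‖ ≤ K * ‖x‖ ∧ ‖z‖ ≤ K * ‖x‖)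
    (f : X →L[ℝ] ℝ) (hf : inDualSpan P f) :
    ∃ m : X →L[ℝ] ℝ, dualPos P m ∧ dualLE P f m ∧ dualLE P (-f) m ∧
      ∀ u : X →L[ℝ] ℝ, inDualSpan P u → dualLE P f u → dualLE P (-f) u →
        dualLE P m u := by
  classical
  obtain ⟨g₀, hg₀, h₀, hh₀, hfd⟩ := hf
  set ψ : X →L[ℝ] ℝ := g₀ + h₀ with hψdef
  set S : ℕ → X → Set ℝ := fun n x => {r | ∃ w : Z, |w| ≤ J x ∧ r = f (R n w)} with hSdef
  set q : ℕ → X → ℝ := fun n x => sSup (S n x) with hqdef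
  -- upper bound for members of S
  have hub : ∀ n, ∀ x ∈ P, ∀ r ∈ S n x, r ≤ ψ (R n (J x)) := by
    rintro n x hx r ⟨w, hw, rfl⟩
    obtain ⟨hw1, hw2⟩ := abs_le'.mp hw
    have h1 : R n (J x - w) ∈ P := hR n _ (sub_nonneg.mpr hw1)
    have h2 : R n (J x + w) ∈ P := hR n _ (by rw [← neg_le_iff_add_nonneg]; exact hw2)
    have e1 : g₀ (R n w) ≤ g₀ (R n (J x)) := by
      have := hg₀ _ h1
      rw [map_sub, map_sub] at this
      linarith
    have e2 : -h₀ (R n w) ≤ h₀ (R n (J x)) := by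
      have := hh₀ _ h2
      rw [map_add, map_add] at this
      linarith
    have : f (R n w) = g₀ (R n w) - h₀ (R n w) := by
      rw [hfd]; simp
    rw [this, hψdef]
    simp only [ContinuousLinearMap.add_apply]
    linarith
  have hne : ∀ n, ∀ x ∈ P, (0:ℝ) ∈ S n x := by
    intro n x hx
    exact ⟨0, by simpa using hJ x hx, by simp⟩
  have hbdd : ∀ n, ∀ x ∈ P, BddAbove (S n x) :=
    fun n x hx => ⟨ψ (R n (J x)), fun r hr => hub n x hx r hr⟩
  have hq0 : ∀ n, ∀ x ∈ P, 0 ≤ q n x :=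
    fun n x hx => le_csSup (hbdd n x hx) (hne n x hx)
  have hqub : ∀ n, ∀ x ∈ P, q n x ≤ ψ (R n (J x)) :=
    fun n x hx => csSup_le ⟨0, hne n x hx⟩ (hub n x hx)
  have hqf : ∀ n, ∀ x ∈ P, f (R n (J x)) ≤ q n x := by
    intro n x hx
    refine le_csSup (hbdd n x hx) ⟨J x, ?_, rfl⟩
    rw [abs_of_nonneg (hJ x hx)]
  have hqnf : ∀ n, ∀ x ∈ P, -(f (R n (J x))) ≤ q n x := by
    intro n x hx
    refine le_csSup (hbdd n x hx) ⟨-(J x), ?_, by rw [map_neg, map_neg]⟩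
    rw [abs_neg, abs_of_nonneg (hJ x hx)]
  have hqu : ∀ (u : X →L[ℝ] ℝ), dualLE P f u → dualLE P (-f) u →
      ∀ n, ∀ x ∈ P, q n x ≤ u (R n (J x)) := by
    rintro u hu1 hu2 n x hx
    refine csSup_le ⟨0, hne n x hx⟩ ?_
    rintro r ⟨w, hw, rfl⟩
    obtain ⟨hw1, hw2⟩ := abs_le'.mp hw
    have h1 : R n (J x - w) ∈ P := hR n _ (sub_nonneg.mpr hw1)
    have h2 : R n (J x + w) ∈ P := hR n _ (by rw [← neg_le_iff_add_nonneg]; exact hw2)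
    have e1 : f (R n (J x + w)) ≤ u (R n (J x + w)) := hu1 _ h2
    have e2 : -(f (R n (J x - w))) ≤ u (R n (J x - w)) := by
      have := hu2 _ h1
      simpa using this
    have key : f (R n w) = (f (R n (J x + w)) - f (R n (J x - w)))/2 := by
      rw [map_add, map_sub, map_add, map_sub]
      ring
    have key2 : u (R n (J x + w)) + u (R n (J x - w)) = 2 * u (R n (J x)) := by
      rw [map_add, map_sub, map_add, map_sub]
      ring
    rw [key]
    linarith
  -- additivity of q on the cone
  have hqadd : ∀ n, ∀ x ∈ P, ∀ y ∈ P, q n (x + y) = q n x + q n y := by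
    intro n x hx y hy
    have hxy := hPadd x hx y hy
    have hJxy : J (x + y) = J x + J y := map_add J x y
    apply le_antisymm
    · refine csSup_le ⟨0, hne n _ hxy⟩ ?_
      rintro r ⟨w, hw, rfl⟩
      rw [hJxy] at hw
      obtain ⟨w₁, w₂, rfl, hw₁, hw₂⟩ := riesz_decomp w (J x) (J y) (hJ x hx) (hJ y hy) hw
      rw [map_add, map_add]
      exact add_le_add (le_csSup (hbdd n x hx) ⟨w₁, hw₁, rfl⟩)
        (le_csSup (hbdd n y hy) ⟨w₂, hw₂, rfl⟩)
    · have hpair : ∀ r₁ ∈ S n x, ∀ r₂ ∈ S n y, r₁ + r₂ ≤ q n (x + y) := by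
        rintro r₁ ⟨w₁, hw₁, rfl⟩ r₂ ⟨w₂, hw₂, rfl⟩
        refine le_csSup (hbdd n _ hxy) ⟨w₁ + w₂, ?_, by rw [map_add, map_add]⟩
        rw [hJxy]
        exact (abs_add_le w₁ w₂).trans (add_le_add hw₁ hw₂)
      have hx1 : q n x ≤ q n (x+y) - q n y := by
        refine csSup_le ⟨0, hne n x hx⟩ (fun r₁ h₁ => ?_)
        have : q n y ≤ q n (x+y) - r₁ := csSup_le ⟨0, hne n y hy⟩
          (fun r₂ h₂ => by linarith [hpair r₁ h₁ r₂ h₂])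
        linarith
      linarith
  -- ultrafilter limits
  set W : Ultrafilter ℕ := Ultrafilter.of atTop with hWdef
  have hWle : (W : Filter ℕ) ≤ atTop := Ultrafilter.of_le _
  have hLex : ∀ x : X, ∃ a : ℝ, x ∈ P → Tendsto (fun n => q n x) (W : Filter ℕ) (𝓝 a) := by
    intro x
    by_cases hx : x ∈ P
    · have htend : Tendsto (fun n => ψ (R n (J x))) atTop (𝓝 (ψ x)) := hWOT x ψ
      obtain ⟨C, hC⟩ := htend.bddAbove_range
      have hmem : ∀ n, q n x ∈ Set.Icc (0:ℝ) C := fun n =>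
        ⟨hq0 n x hx, (hqub n x hx).trans (hC (Set.mem_range_self n))⟩
      obtain ⟨a, -, ha⟩ := (isCompact_Icc (a := (0:ℝ)) (b := C)).ultrafilter_le_nhds'
        (W.map fun n => q n x) (by
          simp only [Ultrafilter.mem_map]
          exact Filter.univ_mem' hmem)
      exact ⟨a, fun _ => by rw [Filter.Tendsto, ← Ultrafilter.coe_map]; exact ha⟩
    · exact ⟨0, fun h => absurd h hx⟩
  choose L hL using hLex
  have hLpos : ∀ x ∈ P, 0 ≤ L x := fun x hx =>
    ge_of_tendsto (hL x hx) (Filter.Eventually.of_forall fun n => hq0 n x hx)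
  have hLψ : ∀ x ∈ P, L x ≤ ψ x := by
    intro x hx
    have h1 : Tendsto (fun n => ψ (R n (J x))) (W:Filter ℕ) (𝓝 (ψ x)) :=
      (hWOT x ψ).mono_left hWle
    exact le_of_tendsto_of_tendsto' (hL x hx) h1 (fun n => hqub n x hx)
  have hLf : ∀ x ∈ P, f x ≤ L x := fun x hx =>
    le_of_tendsto_of_tendsto' ((hWOT x f).mono_left hWle) (hL x hx) (fun n => hqf n x hx)
  have hLnf : ∀ x ∈ P, -(f x) ≤ L x := fun x hx =>
    le_of_tendsto_of_tendsto' (((hWOT x f).mono_left hWle).neg) (hL x hx)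
      (fun n => hqnf n x hx)
  have hLu : ∀ u : X →L[ℝ] ℝ, dualLE P f u → dualLE P (-f) u → ∀ x ∈ P, L x ≤ u x :=
    fun u h1 h2 x hx => le_of_tendsto_of_tendsto' (hL x hx) ((hWOT x u).mono_left hWle)
      (fun n => hqu u h1 h2 n x hx)
  have hLadd : ∀ x ∈ P, ∀ y ∈ P, L (x + y) = L x + L y := by
    intro x hx y hy
    have h2 := hL (x+y) (hPadd x hx y hy)
    have h3 : Tendsto (fun n => q n (x+y)) (W:Filter ℕ) (𝓝 (L x + L y)) :=
      ((hL x hx).add (hL y hy)).congr (fun n => (hqadd n x hx y hy).symm)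
    exact tendsto_nhds_unique h2 h3
  -- extension to all of X
  choose dy dyP dz dzP hdec hdy hdz using hKdec
  have hwd : ∀ y ∈ P, ∀ z ∈ P, ∀ y' ∈ P, ∀ z' ∈ P, y - z = y' - z' →
      L y - L z = L y' - L z' := by
    intro y hy z hz y' hy' z' hz' h
    have he : y + z' = y' + z := sub_eq_sub_iff_add_eq_add.mp h
    have := congrArg L he
    rw [hLadd y hy z' hz', hLadd y' hy' z hz] at this
    linarith
  set μ : X → ℝ := fun x => L (dy x) - L (dz x) with hμdef
  have hμP : ∀ x ∈ P, μ x = L x := by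
    intro x hx
    have h1 : x + dz x = dy x := by nth_rewrite 1 [hdec x]; abel
    have h2 := hLadd x hx (dz x) (dzP x)
    rw [h1] at h2
    simp only [hμdef]
    linarith
  have hμadd : ∀ a b : X, μ (a + b) = μ a + μ b := by
    intro a b
    have hYP : dy a + dy b ∈ P := hPadd _ (dyP a) _ (dyP b)
    have hZP : dz a + dz b ∈ P := hPadd _ (dzP a) _ (dzP b)
    have hdecomp : dy (a+b) - dz (a+b) = (dy a + dy b) - (dz a + dz b) := by
      rw [← hdec (a+b)]
      conv_lhs => rw [hdec a, hdec b]
      abel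
    have hkey := hwd (dy (a+b)) (dyP _) (dz (a+b)) (dzP _) (dy a + dy b) hYP
      (dz a + dz b) hZP hdecomp
    simp only [hμdef]
    rw [hkey, hLadd _ (dyP a) _ (dyP b), hLadd _ (dzP a) _ (dzP b)]
    ring
  have hμbound : ∀ x : X, ‖μ x‖ ≤ (2 * K * ‖ψ‖) * ‖x‖ := by
    intro x
    have h1 : 0 ≤ L (dy x) := hLpos _ (dyP x)
    have h2 : 0 ≤ L (dz x) := hLpos _ (dzP x)
    have h3 : L (dy x) ≤ ψ (dy x) := hLψ _ (dyP x)
    have h4 : L (dz x) ≤ ψ (dz x) := hLψ _ (dzP x)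
    have h5 : ψ (dy x) ≤ ‖ψ‖ * ‖dy x‖ := le_trans (le_abs_self _) (ψ.le_opNorm _)
    have h6 : ψ (dz x) ≤ ‖ψ‖ * ‖dz x‖ := le_trans (le_abs_self _) (ψ.le_opNorm _)
    have h7 : ‖ψ‖ * ‖dy x‖ ≤ ‖ψ‖ * (K * ‖x‖) :=
      mul_le_mul_of_nonneg_left (hdy x) (norm_nonneg ψ)
    have h8 : ‖ψ‖ * ‖dz x‖ ≤ ‖ψ‖ * (K * ‖x‖) :=
      mul_le_mul_of_nonneg_left (hdz x) (norm_nonneg ψ)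
    rw [Real.norm_eq_abs, abs_le]
    constructor
    · simp only [hμdef]; nlinarith
    · simp only [hμdef]; nlinarith
  set Mhom : X →+ ℝ := AddMonoidHom.mk' μ hμadd with hMdef
  have hcont : Continuous Mhom :=
    AddMonoidHomClass.continuous_of_bound Mhom (2 * K * ‖ψ‖) hμbound
  set m : X →L[ℝ] ℝ := Mhom.toRealLinearMap hcont with hmdef
  have hmx : ∀ x : X, m x = μ x := fun x => rfl
  have hmP : ∀ x ∈ P, m x = L x := fun x hx => (hmx x).trans (hμP x hx)
  refine ⟨m, ?_, ?_, ?_, ?_⟩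
  · intro x hx
    rw [hmP x hx]
    exact hLpos x hx
  · intro x hx
    rw [hmP x hx]
    exact hLf x hx
  · intro x hx
    rw [hmP x hx, ContinuousLinearMap.neg_apply]
    exact hLnf x hx
  · intro u hu h1 h2 x hx
    rw [hmP x hx]
    exact hLu u h1 h2 x hx

end aux

/-- Let `X` be a reflexive ordered Banach space with generating (closed)
cone `P`, `Z` a Banach lattice, `J : X → Z` positive and `(Rₙ) : Z → X` positive with
`Rₙ J → id_X` in the weak operator topology. Then `span(X'₊)` (with an equivalent norm)
is a KB-space: it is a vector lattice and every increasing norm-bounded net in its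
positive cone converges with respect to the span norm. -/
theorem stmt11 {X Z : Type*}
    [NormedAddCommGroup X] [NormedSpace ℝ X] [CompleteSpace X]
    [NormedAddCommGroup Z] [Lattice Z] [HasSolidNorm Z] [IsOrderedAddMonoid Z] [NormedSpace ℝ Z] [CompleteSpace Z]
    (hrefl : Function.Surjective (NormedSpace.inclusionInDoubleDual ℝ X))
    (P : Set X) (hPclosed : IsClosed P)
    (hPadd : ∀ x ∈ P, ∀ y ∈ P, x + y ∈ P)
    (hPsmul : ∀ (a : ℝ), 0 ≤ a → ∀ x ∈ P, a • x ∈ P)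
    (hPpointed : ∀ x ∈ P, -x ∈ P → x = 0)
    (hgen : ∀ x : X, ∃ y ∈ P, ∃ z ∈ P, x = y - z)
    (J : X →L[ℝ] Z) (hJ : ∀ x ∈ P, 0 ≤ J x)
    (R : ℕ → Z →L[ℝ] X) (hR : ∀ n, ∀ z : Z, 0 ≤ z → R n z ∈ P)
    (hWOT : ∀ (x : X) (φ : X →L[ℝ] ℝ),
      Tendsto (fun n => φ (R n (J x))) atTop (𝓝 (φ x))) :
    -- `span(X'₊)` is a vector lattice:
    (∀ f : X →L[ℝ] ℝ, inDualSpan P f →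
      ∃ m : X →L[ℝ] ℝ, dualPos P m ∧ dualLE P f m ∧ dualLE P (-f) m ∧
        ∀ u : X →L[ℝ] ℝ, inDualSpan P u → dualLE P f u → dualLE P (-f) u →
          dualLE P m u) ∧
    -- KB-property: increasing span-norm-bounded nets in `X'₊` are span-norm convergent:
    (∀ (ι : Type) [Nonempty ι] [SemilatticeSup ι] (g : ι → X →L[ℝ] ℝ),
      (∀ i, dualPos P (g i)) →
      (∀ i j, i ≤ j → dualLE P (g i) (g j)) →
      (∃ b : ℝ, ∀ i, dualSpanNorm P (g i) ≤ b) →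
      ∃ s : X →L[ℝ] ℝ, inDualSpan P s ∧
        Tendsto (fun i => dualSpanNorm P (s - g i)) atTop (𝓝 0)) := by
  obtain ⟨K, hK, hKdec⟩ := decomp_bound P hPclosed hPadd hPsmul hgen
  constructor
  · intro f hf
    exact part1 P hPadd J hJ R hR hWOT K hK hKdec f hf
  · intro ι _ _ g hpos hmono hbdd
    exact part2 hrefl P hPsmul hgen K hK hKdec ι g hpos hmono hbdd
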